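/- arXiv:1806.05044 — 2 statements merged into one kernel-verified Lean document; each statement's English description precedes it below -/
import Mathlib

section
/- Let A = K[[f_1,…,f_s]] ⊆ F = K[[x_1,…,x_n]] with the length of F/A as an A-module finite. For every a ∈ (ℝ_{>0})^n there exists b ∈ (ℚ_{>0})^n (all coordinates positive rationals) such that M(A,a) = M(A,b). -/
noncomputable section

namespace CanonicalFan

open MvPowerSeries

variable (K : Type*) [Field K] (n : ℕ)

/-- The weight `⟨a, α⟩ = ∑ i, a i * α i` of an exponent `α` with respect to `a`. -/
def weight (a : Fin n → ℝ) (α : Fin n →₀ ℕ) : ℝ := ∑ i, a i * (α i : ℝ)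

/-- The support of a formal power series. -/
def supp (f : MvPowerSeries (Fin n) K) : Set (Fin n →₀ ℕ) :=
  {α | MvPowerSeries.coeff (R := K) α f ≠ 0}

/-- The `a`-valuation `ν(f,a)`, with the convention `ν(0,a) = +∞`. -/
def nu (a : Fin n → ℝ) (f : MvPowerSeries (Fin n) K) : EReal :=
  sInf ((fun α => ((weight n a α : ℝ) : EReal)) '' supp K n f)

open Classical in
/-- The `a`-initial form `in(f,a)` of a power series. -/
def initialForm (a : Fin n → ℝ) (f : MvPowerSeries (Fin n) K) :
    MvPowerSeries (Fin n) K :=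
  fun α => if ((weight n a α : ℝ) : EReal) = nu K n a f then MvPowerSeries.coeff (R := K) α f else 0

open Classical in
/-- `exp(f,a)`: the `≺`-maximal element of the support of `in(f,a)`, where `≺` is the
well-ordering `r` (junk value `0` if no maximal element exists). -/
def exponent (r : (Fin n →₀ ℕ) → (Fin n →₀ ℕ) → Prop) (a : Fin n → ℝ)
    (f : MvPowerSeries (Fin n) K) : Fin n →₀ ℕ :=
  if h : ∃ β ∈ supp K n (initialForm K n a f),
      ∀ γ ∈ supp K n (initialForm K n a f), γ = β ∨ r γ β
  then h.choose else 0

/-- The `a`-leading monomial `M(f,a) = c_{exp(f,a)} x^{exp(f,a)}`. -/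
def leadMon (r : (Fin n →₀ ℕ) → (Fin n →₀ ℕ) → Prop) (a : Fin n → ℝ)
    (f : MvPowerSeries (Fin n) K) : MvPowerSeries (Fin n) K :=
  MvPowerSeries.monomial (R := K) (exponent K n r a f)
    (MvPowerSeries.coeff (R := K) (exponent K n r a f) f)

/-- The maximal ideal `(x_1, …, x_n)` of `K[[x_1,…,x_n]]`. -/
def mIdeal : Ideal (MvPowerSeries (Fin n) K) :=
  Ideal.span (Set.range (MvPowerSeries.X : Fin n → MvPowerSeries (Fin n) K))

/-- `K[[S]]`: the smallest `K`-subalgebra of `K[[x_1,…,x_n]]` containing `S` and closed in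
the `(x_1,…,x_n)`-adic topology; concretely, the adic closure of `Algebra.adjoin K S`. -/
def closedAdjoin (S : Set (MvPowerSeries (Fin n) K)) :
    Subalgebra K (MvPowerSeries (Fin n) K) where
  carrier := {f | ∀ N : ℕ, ∃ g ∈ Algebra.adjoin K S, f - g ∈ (mIdeal K n) ^ N}
  algebraMap_mem' c N :=
    ⟨algebraMap K _ c, Subalgebra.algebraMap_mem _ c, by simp [Ideal.zero_mem]⟩
  add_mem' {f g} hf hg N := by
    obtain ⟨p, hp, hfp⟩ := hf N
    obtain ⟨q, hq, hgq⟩ := hg N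
    exact ⟨p + q, add_mem hp hq, by simpa [add_sub_add_comm] using Ideal.add_mem _ hfp hgq⟩
  mul_mem' {f g} hf hg N := by
    obtain ⟨p, hp, hfp⟩ := hf N
    obtain ⟨q, hq, hgq⟩ := hg N
    refine ⟨p * q, mul_mem hp hq, ?_⟩
    have h : f * g - p * q = f * (g - q) + (f - p) * q := by ring
    rw [h]
    exact Ideal.add_mem _ (Ideal.mul_mem_left _ _ hgq) (Ideal.mul_mem_right _ _ hfp)

/-- `exp(A,a) = {exp(f,a) : f ∈ A, f ≠ 0}`. -/
def expSet (r : (Fin n →₀ ℕ) → (Fin n →₀ ℕ) → Prop) (a : Fin n → ℝ)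
    (A : Set (MvPowerSeries (Fin n) K)) : Set (Fin n →₀ ℕ) :=
  {β | ∃ f ∈ A, f ≠ 0 ∧ exponent K n r a f = β}

/-- `in(A,a) = K[[in(f,a) : f ∈ A ∖ {0}]]`. -/
def inAlgebra (a : Fin n → ℝ) (A : Set (MvPowerSeries (Fin n) K)) :
    Subalgebra K (MvPowerSeries (Fin n) K) :=
  closedAdjoin K n {g | ∃ f ∈ A, f ≠ 0 ∧ initialForm K n a f = g}

/-- `M(A,a) = K[[M(f,a) : f ∈ A ∖ {0}]]`. -/
def leadAlgebra (r : (Fin n →₀ ℕ) → (Fin n →₀ ℕ) → Prop) (a : Fin n → ℝ)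
    (A : Set (MvPowerSeries (Fin n) K)) : Subalgebra K (MvPowerSeries (Fin n) K) :=
  closedAdjoin K n {g | ∃ f ∈ A, f ≠ 0 ∧ leadMon K n r a f = g}

set_option synthInstance.maxHeartbeats 1000000 in
/-- The length of `F/A` as an `A`-module is finite. -/
def FiniteColength (A : Subalgebra K (MvPowerSeries (Fin n) K)) : Prop :=
  IsFiniteLength A
    (MvPowerSeries (Fin n) K ⧸ LinearMap.range (Algebra.linearMap A (MvPowerSeries (Fin n) K)))

/-- `{g_1,…,g_r}` is an `a`-canonical basis of `A`. -/
def IsCanonicalBasis (r : (Fin n →₀ ℕ) → (Fin n →₀ ℕ) → Prop) (a : Fin n → ℝ)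
    (A : Subalgebra K (MvPowerSeries (Fin n) K)) {m : ℕ}
    (g : Fin m → MvPowerSeries (Fin n) K) : Prop :=
  (∀ i, g i ∈ A ∧ g i ≠ 0) ∧
    leadAlgebra K n r a (A : Set (MvPowerSeries (Fin n) K)) =
      closedAdjoin K n (Set.range fun i => leadMon K n r a (g i))

/-- `{g_1,…,g_r}` is a minimal `a`-canonical basis of `A`. -/
def IsMinimalCanonicalBasis (r : (Fin n →₀ ℕ) → (Fin n →₀ ℕ) → Prop) (a : Fin n → ℝ)
    (A : Subalgebra K (MvPowerSeries (Fin n) K)) {m : ℕ}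
    (g : Fin m → MvPowerSeries (Fin n) K) : Prop :=
  IsCanonicalBasis K n r a A g ∧
    ∀ T : Set (MvPowerSeries (Fin n) K),
      T ⊂ Set.range (fun i => leadMon K n r a (g i)) →
        closedAdjoin K n T ≠ leadAlgebra K n r a (A : Set (MvPowerSeries (Fin n) K))

/-- `{g_1,…,g_r}` is the `a`-reduced canonical basis of `A`. -/
def IsReducedCanonicalBasis (r : (Fin n →₀ ℕ) → (Fin n →₀ ℕ) → Prop) (a : Fin n → ℝ)
    (A : Subalgebra K (MvPowerSeries (Fin n) K)) {m : ℕ}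
    (g : Fin m → MvPowerSeries (Fin n) K) : Prop :=
  IsMinimalCanonicalBasis K n r a A g ∧
    (∀ i, MvPowerSeries.coeff (R := K) (exponent K n r a (g i)) (g i) = 1) ∧
    ∀ i, ∀ α ∈ supp K n (g i - leadMon K n r a (g i)),
      (MvPowerSeries.monomial (R := K) α (1 : K)) ∉
        closedAdjoin K n (Set.range fun j => leadMon K n r a (g j))

/-- A power series is a (nonzero) monomial. -/
def IsMonomial (g : MvPowerSeries (Fin n) K) : Prop :=
  ∃ (α : Fin n →₀ ℕ) (c : K), c ≠ 0 ∧ g = MvPowerSeries.monomial (R := K) α c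

/-! ### Auxiliary lemmas -/

section Aux

variable {K n}

lemma weight_nonneg {a : Fin n → ℝ} (ha : ∀ i, 0 ≤ a i) (α : Fin n →₀ ℕ) :
    0 ≤ weight n a α :=
  Finset.sum_nonneg fun i _ => mul_nonneg (ha i) (Nat.cast_nonneg _)

lemma weight_le_sum_smul {a : Fin n → ℝ} (ha : ∀ i, 0 < a i) (α : Fin n →₀ ℕ) :
    weight n a α ≤ (∑ i, a i) * (∑ i, (α i : ℝ)) := by
  rw [Finset.sum_mul]
  refine Finset.sum_le_sum fun i _ => ?_
  have h1 : a i ≤ ∑ j, a j :=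
    Finset.single_le_sum (f := a) (fun j _ => (ha j).le) (Finset.mem_univ i)
  have h2 : (α i : ℝ) ≤ ∑ j, (α j : ℝ) :=
    Finset.single_le_sum (f := fun j => (α j : ℝ)) (fun j _ => by positivity) (Finset.mem_univ i)
  have h3 : (0:ℝ) ≤ (α i : ℝ) := Nat.cast_nonneg _
  have h4 : (0:ℝ) ≤ a i := (ha i).le
  nlinarith

lemma finite_sublevel {a : Fin n → ℝ} (ha : ∀ i, 0 < a i) (C : ℝ) :
    {α : Fin n →₀ ℕ | weight n a α ≤ C}.Finite := by
  classical
  set β : Fin n →₀ ℕ := Finsupp.equivFunOnFinite.symm (fun i => ⌊C / a i⌋₊) with hβ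
  refine (Set.finite_Iic β).subset ?_
  intro α hα
  simp only [Set.mem_setOf_eq] at hα
  intro i
  have hterm : a i * (α i : ℝ) ≤ weight n a α := by
    unfold weight
    refine Finset.single_le_sum (fun j _ => mul_nonneg (ha j).le (Nat.cast_nonneg _))
      (Finset.mem_univ i)
  have : (α i : ℝ) ≤ C / a i := by
    rw [le_div_iff₀ (ha i)]; linarith [hterm]
  have : α i ≤ ⌊C / a i⌋₊ := Nat.le_floor this
  simpa [hβ] using this

end Aux
section Aux2

variable {K n}

lemma mem_supp_iff {f : MvPowerSeries (Fin n) K} {α : Fin n →₀ ℕ} :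
    α ∈ supp K n f ↔ MvPowerSeries.coeff (R := K) α f ≠ 0 := Iff.rfl

lemma coeff_initialForm (a : Fin n → ℝ) (f : MvPowerSeries (Fin n) K) (γ : Fin n →₀ ℕ) :
    MvPowerSeries.coeff (R := K) γ (initialForm K n a f) =
      if ((weight n a γ : ℝ) : EReal) = nu K n a f then MvPowerSeries.coeff (R := K) γ f else 0 := by
  classical
  rfl

/-- existence of a minimizing exponent -/
lemma exists_weight_min {a : Fin n → ℝ} (ha : ∀ i, 0 < a i)
    {f : MvPowerSeries (Fin n) K} (hf : f ≠ 0) :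
    ∃ α, MvPowerSeries.coeff (R := K) α f ≠ 0 ∧
      ∀ γ, MvPowerSeries.coeff (R := K) γ f ≠ 0 → weight n a α ≤ weight n a γ := by
  classical
  have : ∃ α₀, MvPowerSeries.coeff (R := K) α₀ f ≠ 0 := by
    by_contra h
    push_neg at h
    exact hf (MvPowerSeries.ext fun γ => by simpa using h γ)
  obtain ⟨α₀, hα₀⟩ := this
  set T : Set (Fin n →₀ ℕ) :=
    {γ | MvPowerSeries.coeff (R := K) γ f ≠ 0 ∧ weight n a γ ≤ weight n a α₀} with hT
  have hTfin : T.Finite := (finite_sublevel ha (weight n a α₀)).subset fun γ hγ => hγ.2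
  have hTne : T.Nonempty := ⟨α₀, hα₀, le_rfl⟩
  obtain ⟨β, hβT, hβmin⟩ := Set.exists_min_image T (weight n a) hTfin hTne
  refine ⟨β, hβT.1, fun γ hγ => ?_⟩
  by_cases hγT : γ ∈ T
  · exact hβmin γ hγT
  · have : ¬ weight n a γ ≤ weight n a α₀ := fun h => hγT ⟨hγ, h⟩
    linarith [hβmin α₀ ⟨hα₀, le_rfl⟩, hβT.2, not_le.1 this]

lemma nu_eq_of_min {a : Fin n → ℝ} {f : MvPowerSeries (Fin n) K} {α : Fin n →₀ ℕ}
    (hα : MvPowerSeries.coeff (R := K) α f ≠ 0)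
    (hmin : ∀ γ, MvPowerSeries.coeff (R := K) γ f ≠ 0 → weight n a α ≤ weight n a γ) :
    nu K n a f = ((weight n a α : ℝ) : EReal) := by
  refine le_antisymm (sInf_le ⟨α, hα, rfl⟩) (le_sInf ?_)
  rintro x ⟨γ, hγ, rfl⟩
  exact EReal.coe_le_coe_iff.2 (hmin γ hγ)

lemma coeff_initialForm_of_min {a : Fin n → ℝ} {f : MvPowerSeries (Fin n) K} {α : Fin n →₀ ℕ}
    (hα : MvPowerSeries.coeff (R := K) α f ≠ 0)
    (hmin : ∀ γ, MvPowerSeries.coeff (R := K) γ f ≠ 0 → weight n a α ≤ weight n a γ)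
    (γ : Fin n →₀ ℕ) :
    MvPowerSeries.coeff (R := K) γ (initialForm K n a f) =
      if weight n a γ = weight n a α then MvPowerSeries.coeff (R := K) γ f else 0 := by
  classical
  rw [coeff_initialForm, nu_eq_of_min hα hmin]
  congr 1
  simp only [eq_iff_iff]
  exact ⟨fun h => by exact_mod_cast h, fun h => by exact_mod_cast h⟩

lemma mem_supp_initialForm_of_min {a : Fin n → ℝ} {f : MvPowerSeries (Fin n) K}
    {α : Fin n →₀ ℕ}
    (hα : MvPowerSeries.coeff (R := K) α f ≠ 0)
    (hmin : ∀ γ, MvPowerSeries.coeff (R := K) γ f ≠ 0 → weight n a α ≤ weight n a γ)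
    (γ : Fin n →₀ ℕ) :
    γ ∈ supp K n (initialForm K n a f) ↔
      MvPowerSeries.coeff (R := K) γ f ≠ 0 ∧ weight n a γ = weight n a α := by
  classical
  rw [mem_supp_iff, coeff_initialForm_of_min hα hmin]
  split_ifs with h
  · exact ⟨fun hc => ⟨hc, h⟩, fun hc => hc.1⟩
  · exact ⟨fun hc => absurd rfl hc, fun hc => absurd hc.2 h⟩

end Aux2
section Aux3

variable {K n}

lemma exists_rel_max {τ : Type*} (r : τ → τ → Prop) (hr : IsWellOrder τ r)
    {S : Set τ} (hfin : S.Finite) (hne : S.Nonempty) :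
    ∃ β ∈ S, ∀ γ ∈ S, γ = β ∨ r γ β := by
  classical
  haveI := hr.toTrichotomous
  haveI : IsTrans τ r := (haveI := hr; inferInstance)
  haveI : IsStrictTotalOrder τ r := ⟨⟩
  letI : LinearOrder τ := linearOrderOfSTO r
  obtain ⟨β, hβ, hmax⟩ := Set.exists_max_image S id hfin hne
  exact ⟨β, hβ, fun γ hγ => hmax γ hγ⟩

lemma exponent_spec (r : (Fin n →₀ ℕ) → (Fin n →₀ ℕ) → Prop)
    (hr : IsWellOrder (Fin n →₀ ℕ) r) {a : Fin n → ℝ} (ha : ∀ i, 0 < a i)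
    {f : MvPowerSeries (Fin n) K} (hf : f ≠ 0) :
    exponent K n r a f ∈ supp K n (initialForm K n a f) ∧
      ∀ γ ∈ supp K n (initialForm K n a f), γ = exponent K n r a f ∨
        r γ (exponent K n r a f) := by
  classical
  obtain ⟨α, hα, hmin⟩ := exists_weight_min ha hf
  have hfin : (supp K n (initialForm K n a f)).Finite := by
    refine (finite_sublevel ha (weight n a α)).subset ?_
    intro γ hγ
    rw [mem_supp_initialForm_of_min hα hmin] at hγ
    exact le_of_eq hγ.2
  have hne : (supp K n (initialForm K n a f)).Nonempty :=
    ⟨α, (mem_supp_initialForm_of_min hα hmin α).2 ⟨hα, rfl⟩⟩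
  have h : ∃ β ∈ supp K n (initialForm K n a f),
      ∀ γ ∈ supp K n (initialForm K n a f), γ = β ∨ r γ β :=
    exists_rel_max r hr hfin hne
  rw [exponent, dif_pos h]
  exact h.choose_spec

lemma exponent_mem_supp (r : (Fin n →₀ ℕ) → (Fin n →₀ ℕ) → Prop)
    (hr : IsWellOrder (Fin n →₀ ℕ) r) {a : Fin n → ℝ} (ha : ∀ i, 0 < a i)
    {f : MvPowerSeries (Fin n) K} (hf : f ≠ 0) :
    MvPowerSeries.coeff (R := K) (exponent K n r a f) f ≠ 0 ∧
      ∀ γ, MvPowerSeries.coeff (R := K) γ f ≠ 0 →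
        weight n a (exponent K n r a f) ≤ weight n a γ := by
  obtain ⟨α, hα, hmin⟩ := exists_weight_min ha hf
  have := (exponent_spec r hr ha hf).1
  rw [mem_supp_initialForm_of_min hα hmin] at this
  exact ⟨this.1, fun γ hγ => this.2 ▸ hmin γ hγ⟩

end Aux3
section Aux4

variable {K n}

lemma monomial_ne_zero {α : Fin n →₀ ℕ} {c : K} (hc : c ≠ 0) :
    (MvPowerSeries.monomial (R := K) α c : MvPowerSeries (Fin n) K) ≠ 0 := fun h => by
  have := MvPowerSeries.coeff_monomial_same (R := K) α c
  rw [h, map_zero] at this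
  exact hc this.symm

lemma exponent_monomial (r : (Fin n →₀ ℕ) → (Fin n →₀ ℕ) → Prop)
    (hr : IsWellOrder (Fin n →₀ ℕ) r) {a : Fin n → ℝ} (ha : ∀ i, 0 < a i)
    {α : Fin n →₀ ℕ} {c : K} (hc : c ≠ 0) :
    exponent K n r a (MvPowerSeries.monomial (R := K) α c) = α := by
  classical
  have h := (exponent_mem_supp r hr ha (f := MvPowerSeries.monomial (R := K) α c) (monomial_ne_zero hc)).1
  by_contra hne
  rw [MvPowerSeries.coeff_monomial_ne hne] at h
  exact h rfl

lemma leadMon_monomial (r : (Fin n →₀ ℕ) → (Fin n →₀ ℕ) → Prop)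
    (hr : IsWellOrder (Fin n →₀ ℕ) r) {a : Fin n → ℝ} (ha : ∀ i, 0 < a i)
    {α : Fin n →₀ ℕ} {c : K} (hc : c ≠ 0) :
    leadMon K n r a (MvPowerSeries.monomial (R := K) α c) = MvPowerSeries.monomial (R := K) α c := by
  rw [leadMon, exponent_monomial r hr ha hc, MvPowerSeries.coeff_monomial_same]

end Aux4
section Aux5

variable {K n}

lemma subset_closedAdjoin (S : Set (MvPowerSeries (Fin n) K)) :
    S ⊆ (closedAdjoin K n S : Set (MvPowerSeries (Fin n) K)) := fun x hx N =>
  ⟨x, Algebra.subset_adjoin hx, by simp [Ideal.zero_mem]⟩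

lemma mem_closedAdjoin_iff {S : Set (MvPowerSeries (Fin n) K)}
    {x : MvPowerSeries (Fin n) K} :
    x ∈ closedAdjoin K n S ↔
      ∀ N : ℕ, ∃ g ∈ Algebra.adjoin K S, x - g ∈ (mIdeal K n) ^ N := Iff.rfl

lemma closedAdjoin_le {S T : Set (MvPowerSeries (Fin n) K)}
    (h : S ⊆ (closedAdjoin K n T : Set (MvPowerSeries (Fin n) K))) :
    closedAdjoin K n S ≤ closedAdjoin K n T := by
  intro x hx
  rw [mem_closedAdjoin_iff] at hx ⊢
  intro N
  obtain ⟨g, hg, hxg⟩ := hx N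
  have hg' : g ∈ closedAdjoin K n T := by
    have : Algebra.adjoin K S ≤ closedAdjoin K n T := Algebra.adjoin_le h
    exact this hg
  obtain ⟨p, hp, hgp⟩ := hg' N
  exact ⟨p, hp, by simpa using Ideal.add_mem _ hxg hgp⟩

lemma closedAdjoin_mem_of_approx {S : Set (MvPowerSeries (Fin n) K)}
    {x : MvPowerSeries (Fin n) K}
    (h : ∀ N : ℕ, ∃ g ∈ closedAdjoin K n S, x - g ∈ (mIdeal K n) ^ N) :
    x ∈ closedAdjoin K n S := by
  intro N
  obtain ⟨g, hg, hxg⟩ := h N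
  obtain ⟨p, hp, hgp⟩ := hg N
  exact ⟨p, hp, by simpa using Ideal.add_mem _ hxg hgp⟩

lemma monomial_one_mem_pow (α : Fin n →₀ ℕ) :
    (MvPowerSeries.monomial (R := K) α 1 : MvPowerSeries (Fin n) K) ∈
      (mIdeal K n) ^ (α.sum fun _ e => e) := by
  classical
  induction α using Finsupp.induction with
  | zero => simp [MvPowerSeries.monomial_zero_one]
  | single_add i k β hβi hk ih =>
    have hsum : ((Finsupp.single i k + β).sum fun _ e => e) = k + β.sum fun _ e => e := by
      rw [Finsupp.sum_add_index' (fun _ => rfl) (fun _ _ _ => rfl)]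
      simp [Finsupp.sum_single_index]
    have hmul : (MvPowerSeries.monomial (R := K) (Finsupp.single i k + β) (1 : K)) =
        MvPowerSeries.monomial (R := K) (Finsupp.single i k) 1 * MvPowerSeries.monomial (R := K) β 1 := by
      rw [MvPowerSeries.monomial_mul_monomial, one_mul]
    rw [hsum, hmul, pow_add]
    refine Ideal.mul_mem_mul ?_ ih
    rw [← MvPowerSeries.X_pow_eq]
    exact Ideal.pow_mem_pow (Ideal.subset_span (Set.mem_range_self i)) k

lemma monomial_one_mem_pow_of_le {α : Fin n →₀ ℕ} {N : ℕ}
    (h : N ≤ α.sum fun _ e => e) :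
    (MvPowerSeries.monomial (R := K) α 1 : MvPowerSeries (Fin n) K) ∈ (mIdeal K n) ^ N :=
  Ideal.pow_le_pow_right h (monomial_one_mem_pow α)

end Aux5
section Aux6

variable {K n}

set_option synthInstance.maxHeartbeats 1000000 in
set_option maxHeartbeats 1000000 in
lemma exists_pow_subset_of_finiteColength
    {A : Subalgebra K (MvPowerSeries (Fin n) K)}
    (hclosed : ∀ x : MvPowerSeries (Fin n) K,
      (∀ N : ℕ, ∃ g ∈ A, x - g ∈ (mIdeal K n) ^ N) → x ∈ A)
    (hlen : FiniteColength K n A) :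
    ∃ N : ℕ, ∀ z ∈ (mIdeal K n) ^ N, z ∈ A := by
  classical
  rw [FiniteColength, isFiniteLength_iff_isNoetherian_isArtinian] at hlen
  obtain ⟨-, hart⟩ := hlen
  haveI := hart
  set p : Submodule A (MvPowerSeries (Fin n) K) :=
    LinearMap.range (Algebra.linearMap A (MvPowerSeries (Fin n) K)) with hp
  set chain : ℕ → Submodule A (MvPowerSeries (Fin n) K ⧸ p) :=
    fun k => Submodule.map p.mkQ (Submodule.restrictScalars A
      (((mIdeal K n) ^ k : Ideal (MvPowerSeries (Fin n) K)))) with hchain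
  have hmono : ∀ {k l : ℕ}, k ≤ l → chain l ≤ chain k := by
    intro k l hkl
    exact Submodule.map_mono fun x hx =>
      (Ideal.pow_le_pow_right hkl : (mIdeal K n) ^ l ≤ (mIdeal K n) ^ k) hx
  obtain ⟨N, hN⟩ := IsArtinian.monotone_stabilizes
    (⟨fun k => OrderDual.toDual (chain k), fun k l hkl => hmono hkl⟩ :
      ℕ →o (Submodule A (MvPowerSeries (Fin n) K ⧸ p))ᵒᵈ)
  refine ⟨N, fun z hz => ?_⟩
  refine hclosed z fun M => ?_
  have h1 : p.mkQ z ∈ chain N := ⟨z, hz, rfl⟩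
  have h2 : chain N = chain (max M N) := hN (max M N) (le_max_right _ _)
  rw [h2] at h1
  obtain ⟨w, hw, hwz⟩ := h1
  have hzw : z - w ∈ p := by
    have := (Submodule.Quotient.eq p).1 (by simpa [Submodule.mkQ_apply] using hwz.symm)
    exact this
  obtain ⟨g, hg⟩ := hzw
  refine ⟨z - w, ?_, ?_⟩
  · have : (g : MvPowerSeries (Fin n) K) = z - w := by simpa using hg
    rw [← this]; exact g.2
  · have : z - (z - w) = w := by ring
    rw [this]
    exact (Ideal.pow_le_pow_right (le_max_left M N) :
      (mIdeal K n) ^ (max M N) ≤ (mIdeal K n) ^ M) hw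

end Aux6
section Aux7

variable {n : ℕ}

lemma exists_rat_approx (a : Fin n → ℝ) {ε : ℝ} (hε : 0 < ε) :
    ∃ b : Fin n → ℚ, (∀ i, |(b i : ℝ) - a i| < ε) ∧
      (∀ u : Fin n → ℚ, (∑ i, (u i : ℝ) * a i) = 0 →
        (∑ i, (u i : ℝ) * ((b i : ℚ) : ℝ)) = 0) := by
  classical
  set V : Submodule ℚ ℝ := Submodule.span ℚ (Set.range a) with hV
  haveI : FiniteDimensional ℚ V := FiniteDimensional.span_of_finite ℚ (Set.finite_range a)
  set T : Module.Basis (Fin (Module.finrank ℚ V)) ℚ V := Module.finBasis ℚ V with hT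
  set ax : Fin n → V := fun i => ⟨a i, Submodule.subset_span (Set.mem_range_self i)⟩ with hax
  set c : Fin n → Fin (Module.finrank ℚ V) → ℚ := fun i j => T.repr (ax i) j with hc
  set Csum : ℝ := (∑ i, ∑ j, |c i j|) + 1 with hCsum
  have hCsum_pos : 0 < Csum := by
    have : (0:ℝ) ≤ ∑ i, ∑ j, |c i j| := by positivity
    linarith
  have hCsum_ge : ∀ i, (∑ j, |(c i j : ℝ)|) ≤ Csum := by
    intro i
    have h1 : (∑ j, |(c i j : ℝ)|) = ((∑ j, |c i j| : ℚ) : ℝ) := by push_cast; ring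
    have h2 : (∑ j, |c i j| : ℚ) ≤ ∑ i, ∑ j, |c i j| :=
      Finset.single_le_sum (f := fun i => ∑ j, |c i j|)
        (fun i _ => Finset.sum_nonneg fun j _ => abs_nonneg _) (Finset.mem_univ i)
    rw [h1, hCsum]
    calc ((∑ j, |c i j| : ℚ) : ℝ) ≤ ((∑ i, ∑ j, |c i j| : ℚ) : ℝ) := by exact_mod_cast h2
    _ ≤ _ := by
        push_cast
        linarith
  -- choose rational approximations of the basis elements
  have hq : ∀ j : Fin (Module.finrank ℚ V), ∃ q : ℚ, |((T j : ℝ)) - q| < ε / 2 / Csum := by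
    intro j
    exact exists_rat_near _ (div_pos (half_pos hε) hCsum_pos)
  choose q hq using hq
  refine ⟨fun i => ∑ j, c i j * q j, ?_, ?_⟩
  · intro i
    have hrepr : a i = ∑ j, (c i j : ℝ) * (T j : ℝ) := by
      have := T.sum_repr (ax i)
      have hcoe := congrArg (Subtype.val) this
      simp only [AddSubmonoidClass.coe_finset_sum] at hcoe
      show (ax i : ℝ) = _
      rw [← hcoe]
      refine Finset.sum_congr rfl fun j _ => ?_
      rw [SetLike.val_smul, Rat.smul_def]
    have : ((∑ j, c i j * q j : ℚ) : ℝ) - a i = ∑ j, (c i j : ℝ) * ((q j : ℝ) - (T j : ℝ)) := by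
      rw [hrepr]
      push_cast
      rw [← Finset.sum_sub_distrib]
      refine Finset.sum_congr rfl fun j _ => by ring
    rw [this]
    calc |∑ j, (c i j : ℝ) * ((q j : ℝ) - (T j : ℝ))|
        ≤ ∑ j, |(c i j : ℝ) * ((q j : ℝ) - (T j : ℝ))| := Finset.abs_sum_le_sum_abs _ _
      _ ≤ ∑ j, |(c i j : ℝ)| * (ε / 2 / Csum) := by
          refine Finset.sum_le_sum fun j _ => ?_
          rw [abs_mul]
          refine mul_le_mul_of_nonneg_left ?_ (abs_nonneg _)
          rw [abs_sub_comm]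
          exact (hq j).le
      _ = (∑ j, |(c i j : ℝ)|) * (ε / 2 / Csum) := by rw [Finset.sum_mul]
      _ ≤ Csum * (ε / 2 / Csum) := by
          refine mul_le_mul_of_nonneg_right (hCsum_ge i) (by positivity)
      _ = ε / 2 := by field_simp
      _ < ε := by linarith
  · intro u hu
    have hv : (∑ i, u i • ax i) = (0 : V) := by
      apply Subtype.ext
      simp only [AddSubmonoidClass.coe_finset_sum, ZeroMemClass.coe_zero]
      rw [← hu]
      refine Finset.sum_congr rfl fun i _ => ?_
      rw [SetLike.val_smul, Rat.smul_def]
    have hrepr0 : ∀ j, (∑ i, u i * c i j) = 0 := by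
      intro j
      have := congrArg (fun v => T.repr v j) hv
      simp only [map_sum, map_zero, Finsupp.coe_zero, Pi.zero_apply] at this
      rw [← this, Finset.sum_apply']
      refine Finset.sum_congr rfl fun k _ => ?_
      rw [map_smul, Finsupp.smul_apply, smul_eq_mul]
    have : (∑ i, u i * ∑ j, c i j * q j) = 0 := by
      have : (∑ i, u i * ∑ j, c i j * q j) = ∑ j, (∑ i, u i * c i j) * q j := by
        calc (∑ i, u i * ∑ j, c i j * q j)
            = ∑ i, ∑ j, u i * (c i j * q j) := by simp_rw [Finset.mul_sum]
          _ = ∑ j, ∑ i, u i * (c i j * q j) := Finset.sum_comm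
          _ = ∑ j, (∑ i, u i * c i j) * q j := by
              refine Finset.sum_congr rfl fun j _ => ?_
              rw [Finset.sum_mul]
              exact Finset.sum_congr rfl fun i _ => by ring
      rw [this]
      simp [hrepr0]
    calc (∑ i, (u i : ℝ) * ((∑ j, c i j * q j : ℚ) : ℝ))
        = ((∑ i, u i * ∑ j, c i j * q j : ℚ) : ℝ) := by push_cast; ring
      _ = 0 := by rw [this]; norm_num

end Aux7
section Aux8

variable {n : ℕ}

lemma exists_good_rat_weights (a : Fin n → ℝ) (ha : ∀ i, 0 < a i) (hn : 0 < n) (C' : ℝ) :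
    ∃ b : Fin n → ℚ, (∀ i, 0 < b i) ∧
      (∀ γ : Fin n →₀ ℕ, weight n a γ ≤ 2 * weight n (fun i => ((b i : ℚ) : ℝ)) γ) ∧
      (∀ γ : Fin n →₀ ℕ, weight n (fun i => ((b i : ℚ) : ℝ)) γ ≤ 2 * weight n a γ) ∧
      (∀ γ γ' : Fin n →₀ ℕ, weight n a γ = weight n a γ' →
        weight n (fun i => ((b i : ℚ) : ℝ)) γ = weight n (fun i => ((b i : ℚ) : ℝ)) γ') ∧
      (∀ γ γ' : Fin n →₀ ℕ, weight n a γ ≤ C' → weight n a γ' ≤ C' →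
        weight n a γ < weight n a γ' →
        weight n (fun i => ((b i : ℚ) : ℝ)) γ < weight n (fun i => ((b i : ℚ) : ℝ)) γ') := by
  classical
  haveI : Nonempty (Fin n) := ⟨⟨0, hn⟩⟩
  set amin : ℝ := Finset.univ.inf' Finset.univ_nonempty a with hamin
  have hamin_pos : 0 < amin := by
    rw [hamin, Finset.lt_inf'_iff]
    exact fun i _ => ha i
  have hamin_le : ∀ i, amin ≤ a i := fun i =>
    Finset.inf'_le a (Finset.mem_univ i)
  set R : Finset (Fin n →₀ ℕ) := (finite_sublevel ha C').toFinset with hR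
  have hmemR : ∀ γ : Fin n →₀ ℕ, weight n a γ ≤ C' → γ ∈ R := fun γ h =>
    (Set.Finite.mem_toFinset _).2 h
  set D : ℕ := R.sup (fun γ => ∑ i, γ i) with hD
  have hdegD : ∀ γ ∈ R, (∑ i, (γ i : ℝ)) ≤ (D : ℝ) := by
    intro γ hγ
    have : (∑ i, γ i) ≤ D := Finset.le_sup (f := fun γ => ∑ i, γ i) hγ
    calc (∑ i, (γ i : ℝ)) = ((∑ i, γ i : ℕ) : ℝ) := by push_cast; ring
      _ ≤ (D : ℝ) := by exact_mod_cast this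
  set P : Finset ((Fin n →₀ ℕ) × (Fin n →₀ ℕ)) :=
    (R ×ˢ R).filter (fun p => weight n a p.1 < weight n a p.2) with hP
  set δ : ℝ := if h : P.Nonempty then P.inf' h (fun p => weight n a p.2 - weight n a p.1)
    else 1 with hδ
  have hδpos : 0 < δ := by
    rw [hδ]
    split_ifs with h
    · rw [Finset.lt_inf'_iff]
      intro p hp
      have := (Finset.mem_filter.1 hp).2
      linarith
    · norm_num
  have hδle : ∀ γ γ', γ ∈ R → γ' ∈ R → weight n a γ < weight n a γ' →
      δ ≤ weight n a γ' - weight n a γ := by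
    intro γ γ' hγ hγ' hlt
    have hpP : (γ, γ') ∈ P := Finset.mem_filter.2 ⟨Finset.mk_mem_product hγ hγ', hlt⟩
    rw [hδ, dif_pos ⟨_, hpP⟩]
    exact Finset.inf'_le _ hpP
  set ε : ℝ := min (amin / 2) (δ / (2 * ((D : ℝ) + 1))) with hε
  have hεpos : 0 < ε := by
    rw [hε]
    refine lt_min (by linarith) (by positivity)
  obtain ⟨b, hclose, htie⟩ := exists_rat_approx a hεpos
  have hb_lb : ∀ i, a i / 2 ≤ (b i : ℝ) := by
    intro i
    have h1 := hclose i
    have h2 : ε ≤ amin / 2 := min_le_left _ _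
    have h3 := hamin_le i
    have := abs_lt.1 h1
    linarith [this.1, this.2]
  have hb_ub : ∀ i, (b i : ℝ) ≤ 2 * a i := by
    intro i
    have h1 := abs_lt.1 (hclose i)
    have h2 : ε ≤ amin / 2 := min_le_left _ _
    have h3 := hamin_le i
    have h4 := ha i
    linarith [h1.1, h1.2]
  have hbpos : ∀ i, 0 < b i := by
    intro i
    have := hb_lb i
    have h4 := ha i
    have : (0:ℝ) < (b i : ℝ) := by linarith
    exact_mod_cast this
  -- weight difference bound
  have hwdiff : ∀ γ : Fin n →₀ ℕ,
      |weight n (fun i => ((b i : ℚ) : ℝ)) γ - weight n a γ| ≤ ε * ∑ i, (γ i : ℝ) := by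
    intro γ
    have : weight n (fun i => ((b i : ℚ) : ℝ)) γ - weight n a γ
        = ∑ i, ((b i : ℝ) - a i) * (γ i : ℝ) := by
      unfold weight
      rw [← Finset.sum_sub_distrib]
      exact Finset.sum_congr rfl fun i _ => by ring
    rw [this]
    calc |∑ i, ((b i : ℝ) - a i) * (γ i : ℝ)|
        ≤ ∑ i, |((b i : ℝ) - a i) * (γ i : ℝ)| := Finset.abs_sum_le_sum_abs _ _
      _ ≤ ∑ i, ε * (γ i : ℝ) := by
          refine Finset.sum_le_sum fun i _ => ?_
          rw [abs_mul, abs_of_nonneg (show (0:ℝ) ≤ (γ i : ℝ) from Nat.cast_nonneg _)]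
          exact mul_le_mul_of_nonneg_right (hclose i).le (Nat.cast_nonneg _)
      _ = ε * ∑ i, (γ i : ℝ) := by rw [Finset.mul_sum]
  refine ⟨b, hbpos, ?_, ?_, ?_, ?_⟩
  · intro γ
    unfold weight
    rw [Finset.mul_sum]
    refine Finset.sum_le_sum fun i _ => ?_
    have := hb_lb i
    have : (0:ℝ) ≤ (γ i : ℝ) := Nat.cast_nonneg _
    nlinarith
  · intro γ
    unfold weight
    rw [Finset.mul_sum]
    refine Finset.sum_le_sum fun i _ => ?_
    have := hb_ub i
    have : (0:ℝ) ≤ (γ i : ℝ) := Nat.cast_nonneg _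
    nlinarith
  · intro γ γ' hw
    have h0 : (∑ i, ((γ i : ℚ) - (γ' i : ℚ) : ℚ) * ((b i : ℚ))) = 0 := by
      have := htie (fun i => (γ i : ℚ) - (γ' i : ℚ)) ?_
      · exact_mod_cast this
      · have : (∑ i, (((γ i : ℚ) - (γ' i : ℚ) : ℚ) : ℝ) * a i)
            = weight n a γ - weight n a γ' := by
          unfold weight
          rw [← Finset.sum_sub_distrib]
          refine Finset.sum_congr rfl fun i _ => ?_
          push_cast
          ring
        rw [this, hw, sub_self]
    have : weight n (fun i => ((b i : ℚ) : ℝ)) γ - weight n (fun i => ((b i : ℚ) : ℝ)) γ'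
        = ((∑ i, ((γ i : ℚ) - (γ' i : ℚ) : ℚ) * ((b i : ℚ)) : ℚ) : ℝ) := by
      unfold weight
      push_cast
      rw [← Finset.sum_sub_distrib]
      refine Finset.sum_congr rfl fun i _ => by ring
    rw [h0] at this
    push_cast at this
    linarith
  · intro γ γ' hγC hγ'C hlt
    have hγR := hmemR γ hγC
    have hγ'R := hmemR γ' hγ'C
    have hgap := hδle γ γ' hγR hγ'R hlt
    have h1 := hwdiff γ
    have h2 := hwdiff γ'
    have hd1 := hdegD γ hγR
    have hd2 := hdegD γ' hγ'R
    have hεδ : ε ≤ δ / (2 * ((D : ℝ) + 1)) := min_le_right _ _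
    have hDnn : (0:ℝ) ≤ (D:ℝ) := Nat.cast_nonneg _
    have hb1 := abs_le.1 h1
    have hb2 := abs_le.1 h2
    have hnn1 : (0:ℝ) ≤ ∑ i, (γ i : ℝ) := Finset.sum_nonneg fun i _ => Nat.cast_nonneg _
    have hnn2 : (0:ℝ) ≤ ∑ i, (γ' i : ℝ) := Finset.sum_nonneg fun i _ => Nat.cast_nonneg _
    have he1 : ε * ∑ i, (γ i : ℝ) ≤ ε * (D:ℝ) :=
      mul_le_mul_of_nonneg_left hd1 hεpos.le
    have he2 : ε * ∑ i, (γ' i : ℝ) ≤ ε * (D:ℝ) :=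
      mul_le_mul_of_nonneg_left hd2 hεpos.le
    have hkey : 2 * (ε * (D:ℝ)) < δ := by
      have : ε * (D:ℝ) ≤ (δ / (2 * ((D : ℝ) + 1))) * (D:ℝ) :=
        mul_le_mul_of_nonneg_right hεδ hDnn
      have h5 : (δ / (2 * ((D : ℝ) + 1))) * (D:ℝ) < δ / 2 := by
        rw [div_mul_eq_mul_div, div_lt_div_iff₀ (by positivity) (by norm_num)]
        nlinarith
      linarith
    linarith [hb1.1, hb1.2, hb2.1, hb2.2]
end Aux8
section Aux9

variable {K n}

lemma initialForm_congr {a b : Fin n → ℝ} (ha : ∀ i, 0 < a i) (hb : ∀ i, 0 < b i)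
    (hab1 : ∀ γ : Fin n →₀ ℕ, weight n a γ ≤ 2 * weight n b γ)
    (hab2 : ∀ γ : Fin n →₀ ℕ, weight n b γ ≤ 2 * weight n a γ)
    (htie : ∀ γ γ' : Fin n →₀ ℕ, weight n a γ = weight n a γ' →
      weight n b γ = weight n b γ')
    {C : ℝ}
    (hstrict : ∀ γ γ' : Fin n →₀ ℕ, weight n a γ ≤ 4 * C → weight n a γ' ≤ 4 * C →
      weight n a γ < weight n a γ' → weight n b γ < weight n b γ')
    {f : MvPowerSeries (Fin n) K} (hf : f ≠ 0)
    {α₀ : Fin n →₀ ℕ} (hα₀ : MvPowerSeries.coeff (R := K) α₀ f ≠ 0)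
    (hmin : ∀ γ, MvPowerSeries.coeff (R := K) γ f ≠ 0 → weight n a α₀ ≤ weight n a γ)
    (hC : weight n a α₀ ≤ C) :
    initialForm K n a f = initialForm K n b f := by
  classical
  obtain ⟨β₀, hβ₀, hminb⟩ := exists_weight_min hb hf
  have hwnn : ∀ γ : Fin n →₀ ℕ, 0 ≤ weight n a γ := weight_nonneg fun i => (ha i).le
  have hwnnb : ∀ γ : Fin n →₀ ℕ, 0 ≤ weight n b γ := weight_nonneg fun i => (hb i).le
  have hCnn : 0 ≤ C := le_trans (hwnn α₀) hC
  -- β₀ is also an a-minimizer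
  have hβ₀a : weight n a β₀ = weight n a α₀ := by
    by_contra hne
    have hlt : weight n a α₀ < weight n a β₀ := lt_of_le_of_ne (hmin β₀ hβ₀) (Ne.symm hne)
    have hβ₀bd : weight n a β₀ ≤ 4 * C := by
      have h1 : weight n a β₀ ≤ 2 * weight n b β₀ := hab1 β₀
      have h2 : weight n b β₀ ≤ weight n b α₀ := hminb α₀ hα₀
      have h3 : weight n b α₀ ≤ 2 * weight n a α₀ := hab2 α₀
      linarith
    have := hstrict α₀ β₀ (by linarith) hβ₀bd hlt
    have h2 : weight n b β₀ ≤ weight n b α₀ := hminb α₀ hα₀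
    linarith
  -- the two argmin sets coincide
  have hSab : ∀ γ, MvPowerSeries.coeff (R := K) γ f ≠ 0 →
      (weight n a γ = weight n a α₀ ↔ weight n b γ = weight n b β₀) := by
    intro γ hγ
    constructor
    · intro h
      exact htie γ β₀ (h.trans hβ₀a.symm)
    · intro h
      by_contra hne
      have hlt : weight n a α₀ < weight n a γ := lt_of_le_of_ne (hmin γ hγ) (Ne.symm hne)
      have hγbd : weight n a γ ≤ 4 * C := by
        have h1 : weight n a γ ≤ 2 * weight n b γ := hab1 γ
        have h2 : weight n b γ = weight n b β₀ := h
        have h3 : weight n b β₀ ≤ weight n b α₀ := hminb α₀ hα₀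
        have h4 : weight n b α₀ ≤ 2 * weight n a α₀ := hab2 α₀
        linarith
      have := hstrict α₀ γ (by linarith) hγbd hlt
      have h3 : weight n b β₀ ≤ weight n b α₀ := hminb α₀ hα₀
      rw [h] at this
      linarith
  ext γ
  rw [coeff_initialForm_of_min hα₀ hmin, coeff_initialForm_of_min hβ₀ hminb]
  by_cases hγ : MvPowerSeries.coeff (R := K) γ f = 0
  · split_ifs <;> simp [hγ]
  · rw [if_congr (hSab γ hγ) rfl rfl]

lemma exponent_congr (r : (Fin n →₀ ℕ) → (Fin n →₀ ℕ) → Prop)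
    {a b : Fin n → ℝ} (f : MvPowerSeries (Fin n) K)
    (h : initialForm K n a f = initialForm K n b f) :
    exponent K n r a f = exponent K n r b f := by
  unfold exponent
  rw [h]

lemma leadMon_congr (r : (Fin n →₀ ℕ) → (Fin n →₀ ℕ) → Prop)
    {a b : Fin n → ℝ} (f : MvPowerSeries (Fin n) K)
    (h : initialForm K n a f = initialForm K n b f) :
    leadMon K n r a f = leadMon K n r b f := by
  unfold leadMon
  rw [exponent_congr r f h]

end Aux9
/-- every `M(A,a)` is attained at some positive rational weight `b`. -/
theorem leadAlgebra_rational
    (r : (Fin n →₀ ℕ) → (Fin n →₀ ℕ) → Prop) (hr : IsWellOrder (Fin n →₀ ℕ) r)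
    (hradd : ∀ α β γ : Fin n →₀ ℕ, r α β → r (α + γ) (β + γ))
    (s : ℕ) (f : Fin s → MvPowerSeries (Fin n) K) (hf : ∀ i, f i ≠ 0)
    (A : Subalgebra K (MvPowerSeries (Fin n) K)) (hA : A = closedAdjoin K n (Set.range f))
    (hlen : FiniteColength K n A)
    (a : Fin n → ℝ) (ha : ∀ i, 0 < a i) :
    ∃ b : Fin n → ℚ, (∀ i, 0 < b i) ∧
      leadAlgebra K n r a (A : Set (MvPowerSeries (Fin n) K)) =
        leadAlgebra K n r (fun i => (b i : ℝ)) (A : Set (MvPowerSeries (Fin n) K)) := by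
  classical
  by_cases hn : n = 0
  · subst hn
    refine ⟨fun _ => 1, fun i => i.elim0, ?_⟩
    have : (fun i : Fin 0 => (((1:ℚ) : ℝ))) = a := funext fun i => i.elim0
    rw [show (fun i : Fin 0 => (((fun _ => (1:ℚ)) i : ℚ) : ℝ)) = a from funext fun i => i.elim0]
  · have hn' : 0 < n := Nat.pos_of_ne_zero hn
    have hclosed : ∀ x : MvPowerSeries (Fin n) K,
        (∀ N : ℕ, ∃ g ∈ A, x - g ∈ (mIdeal K n) ^ N) → x ∈ A := by
      intro x hx
      rw [hA] at hx ⊢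
      exact closedAdjoin_mem_of_approx hx
    obtain ⟨N, hN⟩ := exists_pow_subset_of_finiteColength hclosed hlen
    set asum : ℝ := ∑ i, a i with hasum
    have hasum_pos : 0 < asum :=
      Finset.sum_pos (fun i _ => ha i) ⟨⟨0, hn'⟩, Finset.mem_univ _⟩
    set C₁ : ℝ := 4 * asum * ((N : ℝ) + 1) + 1 with hC₁
    obtain ⟨b, hbpos, hab1, hab2, htie, hstrict⟩ :=
      exists_good_rat_weights a ha hn' (4 * C₁)
    set b' : Fin n → ℝ := fun i => ((b i : ℚ) : ℝ) with hb'
    have hb'pos : ∀ i, 0 < b' i := fun i => by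
      have h := hbpos i
      show (0:ℝ) < ((b i : ℚ) : ℝ)
      exact_mod_cast h
    refine ⟨b, hbpos, ?_⟩
    -- high-degree monomials belong to A
    have hmonA : ∀ α : Fin n →₀ ℕ, C₁ < weight n a α →
        (MvPowerSeries.monomial (R := K) α (1 : K)) ∈ A ∧
          (MvPowerSeries.monomial (R := K) α (1 : K)) ≠ (0 : MvPowerSeries (Fin n) K) := by
      intro α hw
      have hle : weight n a α ≤ asum * ∑ i, (α i : ℝ) := weight_le_sum_smul ha α
      have hdeg : (N : ℝ) < ∑ i, (α i : ℝ) := by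
        by_contra hcon
        push_neg at hcon
        have h1 : asum * ∑ i, (α i : ℝ) ≤ asum * (N : ℝ) :=
          mul_le_mul_of_nonneg_left hcon hasum_pos.le
        rw [hC₁] at hw
        nlinarith
      have hdegN : N ≤ α.sum fun _ e => e := by
        have hsum : (α.sum fun _ e => e) = ∑ i, α i :=
          Finsupp.sum_fintype α _ fun i => rfl
        rw [hsum]
        have : (N : ℝ) < ((∑ i, α i : ℕ) : ℝ) := by push_cast; exact hdeg
        exact_mod_cast this.le
      exact ⟨hN _ (monomial_one_mem_pow_of_le hdegN), monomial_ne_zero one_ne_zero⟩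
    -- description of generating sets
    unfold leadAlgebra
    apply le_antisymm
    · apply closedAdjoin_le
      rintro g ⟨p, hpA, hp0, rfl⟩
      obtain ⟨α₀, hα₀, hmin⟩ := exists_weight_min ha hp0
      by_cases hsmall : weight n a α₀ ≤ C₁
      · have hIF := initialForm_congr ha hb'pos hab1 hab2 htie hstrict hp0 hα₀ hmin hsmall
        rw [leadMon_congr r p hIF]
        exact subset_closedAdjoin _ ⟨p, hpA, hp0, rfl⟩
      · push_neg at hsmall
        set e := exponent K n r a p with he
        obtain ⟨hce, hemin⟩ := exponent_mem_supp r hr ha hp0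
        have hwe : C₁ < weight n a e := lt_of_lt_of_le hsmall (hmin e hce)
        obtain ⟨hmA, hm0⟩ := hmonA e hwe
        have hgen : (MvPowerSeries.monomial (R := K) e (1 : K)) ∈
            {g | ∃ q ∈ (A : Set (MvPowerSeries (Fin n) K)), q ≠ 0 ∧
              leadMon K n r b' q = g} :=
          ⟨MvPowerSeries.monomial (R := K) e 1, hmA, hm0, leadMon_monomial r hr hb'pos one_ne_zero⟩
        have hmem := subset_closedAdjoin _ hgen
        have : leadMon K n r a p =
            (MvPowerSeries.coeff (R := K) e p) • MvPowerSeries.monomial (R := K) e (1 : K) := by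
          rw [leadMon, ← map_smul, smul_eq_mul, mul_one]
        rw [this]
        exact Subalgebra.smul_mem _ hmem _
    · apply closedAdjoin_le
      rintro g ⟨p, hpA, hp0, rfl⟩
      obtain ⟨α₀, hα₀, hmin⟩ := exists_weight_min ha hp0
      by_cases hsmall : weight n a α₀ ≤ C₁
      · have hIF := initialForm_congr ha hb'pos hab1 hab2 htie hstrict hp0 hα₀ hmin hsmall
        rw [← leadMon_congr r p hIF]
        exact subset_closedAdjoin _ ⟨p, hpA, hp0, rfl⟩
      · push_neg at hsmall
        set e := exponent K n r b' p with he
        obtain ⟨hce, hemin⟩ := exponent_mem_supp r hr hb'pos hp0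
        have hwe : C₁ < weight n a e := lt_of_lt_of_le hsmall (hmin e hce)
        obtain ⟨hmA, hm0⟩ := hmonA e hwe
        have hgen : (MvPowerSeries.monomial (R := K) e (1 : K)) ∈
            {g | ∃ q ∈ (A : Set (MvPowerSeries (Fin n) K)), q ≠ 0 ∧
              leadMon K n r a q = g} :=
          ⟨MvPowerSeries.monomial (R := K) e 1, hmA, hm0, leadMon_monomial r hr ha one_ne_zero⟩
        have hmem := subset_closedAdjoin _ hgen
        have : leadMon K n r b' p =
            (MvPowerSeries.coeff (R := K) e p) • MvPowerSeries.monomial (R := K) e (1 : K) := by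
          rw [leadMon, ← map_smul, smul_eq_mul, mul_one]
        rw [this]
        exact Subalgebra.smul_mem _ hmem _

end CanonicalFan
end
end

section
/- Let K be a field and A = K[[x+y, xy, xy²]] ⊆ K[[x,y]]. Then for every integer n ≥ 1, the monomial x y^n belongs to A. -/
noncomputable section

namespace CanonicalFan

open MvPowerSeries

variable (K : Type*) [Field K] (n : ℕ)

/-- in `A = K[[x+y, xy, xy²]] ⊆ K[[x,y]]`, the monomial `x yⁿ` belongs to
`A` for every `n ≥ 1`. -/
theorem xyn_mem
    (m : ℕ) (hm : 1 ≤ m) :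
    (MvPowerSeries.X 0 * MvPowerSeries.X 1 ^ m : MvPowerSeries (Fin 2) K) ∈
      closedAdjoin K 2 {MvPowerSeries.X 0 + MvPowerSeries.X 1,
        MvPowerSeries.X 0 * MvPowerSeries.X 1,
        MvPowerSeries.X 0 * MvPowerSeries.X 1 ^ 2} := by
  set S : Set (MvPowerSeries (Fin 2) K) := {MvPowerSeries.X 0 + MvPowerSeries.X 1,
        MvPowerSeries.X 0 * MvPowerSeries.X 1,
        MvPowerSeries.X 0 * MvPowerSeries.X 1 ^ 2} with hS
  have hadj : (MvPowerSeries.X 0 * MvPowerSeries.X 1 ^ m : MvPowerSeries (Fin 2) K) ∈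
      Algebra.adjoin K S := by
    have key : ∀ k : ℕ,
        (MvPowerSeries.X 0 * MvPowerSeries.X 1 ^ (k + 1) : MvPowerSeries (Fin 2) K) ∈
          Algebra.adjoin K S ∧
        (MvPowerSeries.X 0 * MvPowerSeries.X 1 ^ (k + 2) : MvPowerSeries (Fin 2) K) ∈
          Algebra.adjoin K S := by
      intro k
      induction k with
      | zero =>
        constructor
        · exact Algebra.subset_adjoin (by simp [hS])
        · exact Algebra.subset_adjoin (by simp [hS])
      | succ k ih =>
        refine ⟨ih.2, ?_⟩
        have h1 : ((MvPowerSeries.X 0 + MvPowerSeries.X 1 : MvPowerSeries (Fin 2) K)) ∈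
            Algebra.adjoin K S := Algebra.subset_adjoin (by simp [hS])
        have h2 : ((MvPowerSeries.X 0 * MvPowerSeries.X 1 : MvPowerSeries (Fin 2) K)) ∈
            Algebra.adjoin K S := Algebra.subset_adjoin (by simp [hS])
        have heq : (MvPowerSeries.X 0 * MvPowerSeries.X 1 ^ (k + 1 + 2) :
            MvPowerSeries (Fin 2) K) =
            (MvPowerSeries.X 0 + MvPowerSeries.X 1) *
              (MvPowerSeries.X 0 * MvPowerSeries.X 1 ^ (k + 2)) -
            (MvPowerSeries.X 0 * MvPowerSeries.X 1) *
              (MvPowerSeries.X 0 * MvPowerSeries.X 1 ^ (k + 1)) := by ring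
        rw [heq]
        exact sub_mem (mul_mem h1 ih.2) (mul_mem h2 ih.1)
    obtain ⟨k, rfl⟩ : ∃ k, m = k + 1 := ⟨m - 1, (Nat.succ_pred_eq_of_pos hm).symm⟩
    exact (key k).1
  intro N
  exact ⟨_, hadj, by simp⟩

end CanonicalFan
end
end
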